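/- Let (Y_n)_{n≥-2} be i.i.d. uniform on [0,1], Z_{n,1} = max{Y_n, Y_{n-2}, Y_{n-3}}, Z_{n,2} = Y_n, u_{n,j} = 1 − τ'_j/n, τ'_j > 0. Writing A_{1,n}^{(1)} = {Z_{1,1} ≤ u_{n,1} < Z_{2,1}} and A_{1,n}^{(2)} = {Z_{1,2} ≤ u_{n,2} < Z_{2,2}}, the limit of n·P(A_{1,n}^{(1)} ∩ (A_{1,n}^{(2)})^c) as n → ∞ equals τ'_1 if τ'_2 ≥ τ'_1 and equals 2τ'_1 − τ'_2 if τ'_2 < τ'_1; and the limit of n·P((A_{1,n}^{(1)})^c ∩ A_{1,n}^{(2)}) equals τ'_2 − τ'_1 if τ'_2 ≥ τ'_1 and 0 if τ'_2 < τ'_1. -/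

import Mathlib

open MeasureTheory ProbabilityTheory Filter Set

lemma uniIic (u : ℝ) (h0 : 0 ≤ u) (h1 : u ≤ 1) :
    (volume.restrict (Icc (0:ℝ) 1)) (Iic u) = ENNReal.ofReal u := by
  rw [Measure.restrict_apply measurableSet_Iic]
  have : Iic u ∩ Icc (0:ℝ) 1 = Icc 0 u := by
    ext x
    simp only [mem_inter_iff, mem_Iic, mem_Icc]
    constructor
    · rintro ⟨h, h2, _⟩; exact ⟨h2, h⟩
    · rintro ⟨h2, h⟩; exact ⟨h, h2, h.trans h1⟩
  rw [this, Real.volume_Icc, sub_zero]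

lemma uniIoi (u : ℝ) (h0 : 0 ≤ u) :
    (volume.restrict (Icc (0:ℝ) 1)) (Ioi u) = ENNReal.ofReal (1 - u) := by
  rw [Measure.restrict_apply measurableSet_Ioi]
  have : Ioi u ∩ Icc (0:ℝ) 1 = Ioc u 1 := by
    ext x
    simp only [mem_inter_iff, mem_Ioi, mem_Icc, mem_Ioc]
    constructor
    · rintro ⟨h, _, h2⟩; exact ⟨h, h2⟩
    · rintro ⟨h, h2⟩; exact ⟨h, le_of_lt (h0.trans_lt h), h2⟩
  rw [this, Real.volume_Ioc]

lemma uniIoc (a b : ℝ) (h0 : 0 ≤ a) (h1 : b ≤ 1) :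
    (volume.restrict (Icc (0:ℝ) 1)) (Ioc a b) = ENNReal.ofReal (b - a) := by
  rw [Measure.restrict_apply measurableSet_Ioc]
  have : Ioc a b ∩ Icc (0:ℝ) 1 = Ioc a b := by
    apply inter_eq_left.2
    intro x hx
    exact ⟨le_of_lt (h0.trans_lt hx.1), hx.2.trans h1⟩
  rw [this, Real.volume_Ioc]

lemma uniUniv : (volume.restrict (Icc (0:ℝ) 1)) univ = 1 := by
  rw [Measure.restrict_apply_univ, Real.volume_Icc]
  norm_num

lemma rect5 {Ω : Type*} [MeasurableSpace Ω] (P : Measure Ω)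
    (Y : ℤ → Ω → ℝ) (hYm : ∀ i, Measurable (Y i))
    (hIndep : iIndepFun Y P)
    (hUnif : ∀ i, Measure.map (Y i) P = volume.restrict (Icc (0:ℝ) 1))
    (g : ℤ → Set ℝ) (hg : ∀ i, MeasurableSet (g i)) :
    P (Y (-2) ⁻¹' g (-2) ∩ (Y (-1) ⁻¹' g (-1) ∩ (Y 0 ⁻¹' g 0 ∩ (Y 1 ⁻¹' g 1 ∩ Y 2 ⁻¹' g 2)))) =
    (volume.restrict (Icc (0:ℝ) 1)) (g (-2)) * (volume.restrict (Icc (0:ℝ) 1)) (g (-1)) *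
    (volume.restrict (Icc (0:ℝ) 1)) (g 0) * (volume.restrict (Icc (0:ℝ) 1)) (g 1) *
    (volume.restrict (Icc (0:ℝ) 1)) (g 2) := by
  have hmap : ∀ i : ℤ, P (Y i ⁻¹' g i) = (volume.restrict (Icc (0:ℝ) 1)) (g i) := by
    intro i
    rw [← hUnif i, Measure.map_apply (hYm i) (hg i)]
  have h := hIndep.meas_biInter (S := ({-2, -1, 0, 1, 2} : Finset ℤ))
    (s := fun i => Y i ⁻¹' g i) (fun i _ => ⟨g i, hg i, rfl⟩)
  have hset : (⋂ i ∈ ({-2, -1, 0, 1, 2} : Finset ℤ), Y i ⁻¹' g i) =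
      Y (-2) ⁻¹' g (-2) ∩ (Y (-1) ⁻¹' g (-1) ∩ (Y 0 ⁻¹' g 0 ∩ (Y 1 ⁻¹' g 1 ∩ Y 2 ⁻¹' g 2))) := by
    simp [Finset.set_biInter_insert]
  rw [hset] at h
  rw [h]
  rw [Finset.prod_insert (by decide), Finset.prod_insert (by decide),
    Finset.prod_insert (by decide), Finset.prod_insert (by decide), Finset.prod_singleton]
  rw [hmap, hmap, hmap, hmap, hmap]
  ring

lemma rect5' {Ω : Type*} [MeasurableSpace Ω] (P : Measure Ω)
    (Y : ℤ → Ω → ℝ) (hYm : ∀ i, Measurable (Y i))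
    (hIndep : iIndepFun Y P)
    (hUnif : ∀ i, Measure.map (Y i) P = volume.restrict (Icc (0:ℝ) 1))
    (a b c d e : Set ℝ) (ha : MeasurableSet a) (hb : MeasurableSet b) (hc : MeasurableSet c)
    (hd : MeasurableSet d) (he : MeasurableSet e) :
    P (Y (-2) ⁻¹' a ∩ (Y (-1) ⁻¹' b ∩ (Y 0 ⁻¹' c ∩ (Y 1 ⁻¹' d ∩ Y 2 ⁻¹' e)))) =
    (volume.restrict (Icc (0:ℝ) 1)) a * (volume.restrict (Icc (0:ℝ) 1)) b *
    (volume.restrict (Icc (0:ℝ) 1)) c * (volume.restrict (Icc (0:ℝ) 1)) d *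
    (volume.restrict (Icc (0:ℝ) 1)) e := by
  set g : ℤ → Set ℝ := fun i =>
    if i = -2 then a else if i = -1 then b else if i = 0 then c else if i = 1 then d else e
    with hgdef
  have hmeas : ∀ i, MeasurableSet (g i) := by
    intro i
    rw [hgdef]
    dsimp only
    split
    · exact ha
    split
    · exact hb
    split
    · exact hc
    split
    · exact hd
    · exact he
  have g1 : g (-2) = a := by norm_num [hgdef]
  have g2 : g (-1) = b := by norm_num [hgdef]
  have g3 : g 0 = c := by norm_num [hgdef]
  have g4 : g 1 = d := by norm_num [hgdef]
  have g5 : g 2 = e := by norm_num [hgdef]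
  have := rect5 P Y hYm hIndep hUnif g hmeas
  rw [g1, g2, g3, g4, g5] at this
  exact this

theorem stmt14
    {Ω : Type*} [MeasurableSpace Ω] (P : Measure Ω) [IsProbabilityMeasure P]
    (Y : ℤ → Ω → ℝ) (hYm : ∀ i, Measurable (Y i))
    (hIndep : iIndepFun Y P)
    (hUnif : ∀ i, Measure.map (Y i) P = volume.restrict (Icc (0:ℝ) 1))
    (τ'₁ τ'₂ : ℝ) (hτ₁ : 0 < τ'₁) (hτ₂ : 0 < τ'₂)
    (Z₁ Z₂ : ℕ → Ω → ℝ)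
    (hZ₁ : ∀ i : ℕ, Z₁ i = fun ω => max (Y i ω) (max (Y ((i:ℤ) - 2) ω) (Y ((i:ℤ) - 3) ω)))
    (hZ₂ : ∀ i : ℕ, Z₂ i = fun ω => Y i ω)
    (u₁ u₂ : ℕ → ℝ) (hu₁ : ∀ n : ℕ, u₁ n = 1 - τ'₁ / n) (hu₂ : ∀ n : ℕ, u₂ n = 1 - τ'₂ / n)
    (A₁ A₂ : ℕ → Set Ω)
    (hA₁ : ∀ n, A₁ n = {ω | Z₁ 1 ω ≤ u₁ n ∧ u₁ n < Z₁ 2 ω})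
    (hA₂ : ∀ n, A₂ n = {ω | Z₂ 1 ω ≤ u₂ n ∧ u₂ n < Z₂ 2 ω}) :
    Tendsto (fun n : ℕ => (n : ℝ) * (P (A₁ n ∩ (A₂ n)ᶜ)).toReal)
        atTop (nhds (if τ'₁ ≤ τ'₂ then τ'₁ else 2 * τ'₁ - τ'₂))
    ∧ Tendsto (fun n : ℕ => (n : ℝ) * (P ((A₁ n)ᶜ ∩ A₂ n)).toReal)
        atTop (nhds (if τ'₁ ≤ τ'₂ then τ'₂ - τ'₁ else 0)) := by
  -- normalize the events
  have hA₁' : ∀ n, A₁ n = {ω | (Y 1 ω ≤ u₁ n ∧ Y (-1) ω ≤ u₁ n ∧ Y (-2) ω ≤ u₁ n) ∧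
      (u₁ n < Y 2 ω ∨ u₁ n < Y 0 ω ∨ u₁ n < Y (-1) ω)} := by
    intro n
    rw [hA₁ n, hZ₁ 1, hZ₁ 2]
    norm_num [max_le_iff, lt_max_iff, and_assoc]
  have hA₂' : ∀ n, A₂ n = {ω | Y 1 ω ≤ u₂ n ∧ u₂ n < Y 2 ω} := by
    intro n
    rw [hA₂ n, hZ₂ 1, hZ₂ 2]
    norm_num
  -- set identities
  have id1 : ∀ w : ℝ, {ω | (Y 1 ω ≤ w ∧ Y (-1) ω ≤ w ∧ Y (-2) ω ≤ w) ∧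
      (w < Y 2 ω ∨ w < Y 0 ω ∨ w < Y (-1) ω)}
      = (Y (-2) ⁻¹' Iic w ∩ (Y (-1) ⁻¹' Iic w ∩ ((Y 0 ⁻¹' univ) ∩ (Y 1 ⁻¹' Iic w ∩ Y 2 ⁻¹' Ioi w))))
        ∪ (Y (-2) ⁻¹' Iic w ∩ (Y (-1) ⁻¹' Iic w ∩ ((Y 0 ⁻¹' Ioi w) ∩ (Y 1 ⁻¹' Iic w ∩ Y 2 ⁻¹' Iic w)))) := by
    intro w; ext ω
    simp only [mem_setOf_eq, mem_union, mem_inter_iff, mem_preimage, mem_Iic, mem_Ioi,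
      mem_univ, true_and]
    constructor
    · rintro ⟨⟨h1, hm1, hm2⟩, hB⟩
      rcases le_or_gt (Y 2 ω) w with h2 | h2
      · right
        refine ⟨hm2, hm1, ?_, h1, h2⟩
        rcases hB with h | h | h
        · linarith
        · exact h
        · linarith
      · left; exact ⟨hm2, hm1, h1, h2⟩
    · rintro (⟨hm2, hm1, h1, h2⟩ | ⟨hm2, hm1, h0, h1, h2⟩)
      · exact ⟨⟨h1, hm1, hm2⟩, Or.inl h2⟩
      · exact ⟨⟨h1, hm1, hm2⟩, Or.inr (Or.inl h0)⟩
  have id2 : ∀ w : ℝ, {ω | Y 1 ω ≤ w ∧ w < Y 2 ω}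
      = (Y (-2) ⁻¹' (univ : Set ℝ) ∩ (Y (-1) ⁻¹' univ ∩ ((Y 0 ⁻¹' univ) ∩
        (Y 1 ⁻¹' Iic w ∩ Y 2 ⁻¹' Ioi w)))) := by
    intro w; ext ω
    simp [mem_setOf_eq, mem_preimage]
  -- measurability of rectangles: base facts
  have hIic : ∀ (i : ℤ) (w : ℝ), MeasurableSet (Y i ⁻¹' Iic w) := fun i w => hYm i measurableSet_Iic
  have hIoi : ∀ (i : ℤ) (w : ℝ), MeasurableSet (Y i ⁻¹' Ioi w) := fun i w => hYm i measurableSet_Ioi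
  have hIoc : ∀ (i : ℤ) (a b : ℝ), MeasurableSet (Y i ⁻¹' Ioc a b) :=
    fun i a b => hYm i measurableSet_Ioc
  have hUv : ∀ (i : ℤ), MeasurableSet (Y i ⁻¹' (univ : Set ℝ)) := fun i => hYm i MeasurableSet.univ
  have hA₁m : ∀ n, MeasurableSet (A₁ n) := by
    intro n
    rw [hA₁' n, id1]
    exact ((hIic _ _).inter ((hIic _ _).inter ((hUv _).inter ((hIic _ _).inter (hIoi _ _))))).union
      ((hIic _ _).inter ((hIic _ _).inter ((hIoi _ _).inter ((hIic _ _).inter (hIic _ _)))))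
  have hA₂m : ∀ n, MeasurableSet (A₂ n) := by
    intro n
    rw [hA₂' n, id2]
    exact (hUv _).inter ((hUv _).inter ((hUv _).inter ((hIic _ _).inter (hIoi _ _))))
  -- toReal of P(A₁ n)
  have hPA₁ : ∀ n : ℕ, 0 ≤ u₁ n → u₁ n ≤ 1 →
      (P (A₁ n)).toReal = (u₁ n)^3 * (1 - u₁ n) + (u₁ n)^4 * (1 - u₁ n) := by
    intro n h0 h1
    rw [hA₁' n, id1]
    rw [measure_union ?hdisj
      ((hIic _ _).inter ((hIic _ _).inter ((hIoi _ _).inter ((hIic _ _).inter (hIic _ _)))))]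
    case hdisj =>
      rw [Set.disjoint_left]
      rintro ω ⟨-, -, -, -, h2⟩ ⟨-, -, -, -, h2'⟩
      simp only [mem_preimage, mem_Ioi, mem_Iic] at h2 h2'
      linarith
    rw [ENNReal.toReal_add (measure_ne_top _ _) (measure_ne_top _ _)]
    rw [rect5' P Y hYm hIndep hUnif _ _ _ _ _ measurableSet_Iic measurableSet_Iic
      MeasurableSet.univ measurableSet_Iic measurableSet_Ioi]
    rw [rect5' P Y hYm hIndep hUnif _ _ _ _ _ measurableSet_Iic measurableSet_Iic
      measurableSet_Ioi measurableSet_Iic measurableSet_Iic]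
    rw [uniIic _ h0 h1, uniIoi _ h0, uniUniv]
    simp only [ENNReal.toReal_mul, ENNReal.toReal_ofReal h0,
      ENNReal.toReal_ofReal (by linarith : (0:ℝ) ≤ 1 - u₁ n), ENNReal.toReal_one]
    ring
  -- toReal of P(A₂ n)
  have hPA₂ : ∀ n : ℕ, 0 ≤ u₂ n → u₂ n ≤ 1 →
      (P (A₂ n)).toReal = u₂ n * (1 - u₂ n) := by
    intro n h0 h1
    rw [hA₂' n, id2]
    rw [rect5' P Y hYm hIndep hUnif _ _ _ _ _ MeasurableSet.univ MeasurableSet.univ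
      MeasurableSet.univ measurableSet_Iic measurableSet_Ioi]
    rw [uniIic _ h0 h1, uniIoi _ h0, uniUniv]
    simp only [ENNReal.toReal_mul, ENNReal.toReal_ofReal h0,
      ENNReal.toReal_ofReal (by linarith : (0:ℝ) ≤ 1 - u₂ n), ENNReal.toReal_one]
    ring
  -- differences
  have hdiff1 : ∀ n, (P (A₁ n ∩ (A₂ n)ᶜ)).toReal
      = (P (A₁ n)).toReal - (P (A₁ n ∩ A₂ n)).toReal := by
    intro n
    have h := measure_inter_add_diff (μ := P) (A₁ n) (hA₂m n)
    rw [show A₁ n ∩ (A₂ n)ᶜ = A₁ n \ A₂ n from (diff_eq _ _).symm]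
    have h' := congrArg ENNReal.toReal h
    rw [ENNReal.toReal_add (measure_ne_top _ _) (measure_ne_top _ _)] at h'
    linarith
  have hdiff2 : ∀ n, (P ((A₁ n)ᶜ ∩ A₂ n)).toReal
      = (P (A₂ n)).toReal - (P (A₁ n ∩ A₂ n)).toReal := by
    intro n
    have h := measure_inter_add_diff (μ := P) (A₂ n) (hA₁m n)
    rw [show (A₁ n)ᶜ ∩ A₂ n = A₂ n \ A₁ n from by rw [diff_eq, inter_comm]]
    have h' := congrArg ENNReal.toReal h
    rw [ENNReal.toReal_add (measure_ne_top _ _) (measure_ne_top _ _)] at h'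
    rw [show A₂ n ∩ A₁ n = A₁ n ∩ A₂ n from inter_comm _ _] at h'
    linarith
  -- limits of u₁, u₂
  have hu : Tendsto (fun n : ℕ => u₁ n) atTop (nhds 1) := by
    have he : (fun n : ℕ => u₁ n) = fun n : ℕ => 1 - τ'₁ / n := funext hu₁
    rw [he]
    have h := (tendsto_const_nhds (x := (1:ℝ)) (f := atTop)).sub
      (tendsto_const_div_atTop_nhds_zero_nat τ'₁)
    simpa using h
  have hv : Tendsto (fun n : ℕ => u₂ n) atTop (nhds 1) := by
    have he : (fun n : ℕ => u₂ n) = fun n : ℕ => 1 - τ'₂ / n := funext hu₂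
    rw [he]
    have h := (tendsto_const_nhds (x := (1:ℝ)) (f := atTop)).sub
      (tendsto_const_div_atTop_nhds_zero_nat τ'₂)
    simpa using h
  -- eventual bounds
  have hev : ∀ᶠ n : ℕ in atTop, (1:ℝ) ≤ n ∧ τ'₁ ≤ n ∧ τ'₂ ≤ n := by
    have h1 : ∀ᶠ n : ℕ in atTop, (1:ℝ) ≤ n := tendsto_natCast_atTop_atTop.eventually_ge_atTop 1
    have h2 : ∀ᶠ n : ℕ in atTop, τ'₁ ≤ (n:ℝ) := tendsto_natCast_atTop_atTop.eventually_ge_atTop τ'₁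
    have h3 : ∀ᶠ n : ℕ in atTop, τ'₂ ≤ (n:ℝ) := tendsto_natCast_atTop_atTop.eventually_ge_atTop τ'₂
    filter_upwards [h1, h2, h3] with n a b c
    exact ⟨a, b, c⟩
  have hbounds : ∀ n : ℕ, (1:ℝ) ≤ n → τ'₁ ≤ (n:ℝ) → τ'₂ ≤ (n:ℝ) →
      (0 ≤ u₁ n ∧ u₁ n ≤ 1) ∧ (0 ≤ u₂ n ∧ u₂ n ≤ 1) ∧
      (n:ℝ) * (1 - u₁ n) = τ'₁ ∧ (n:ℝ) * (1 - u₂ n) = τ'₂ := by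
    intro n h1 h2 h3
    have hn0 : (0:ℝ) < n := by linarith
    have hne : (n:ℝ) ≠ 0 := ne_of_gt hn0
    have d1 : τ'₁ / n ≤ 1 := (div_le_one hn0).2 h2
    have d2 : τ'₂ / n ≤ 1 := (div_le_one hn0).2 h3
    have d3 : 0 ≤ τ'₁ / n := div_nonneg hτ₁.le hn0.le
    have d4 : 0 ≤ τ'₂ / n := div_nonneg hτ₂.le hn0.le
    refine ⟨⟨?_, ?_⟩, ⟨?_, ?_⟩, ?_, ?_⟩
    · rw [hu₁]; linarith
    · rw [hu₁]; linarith
    · rw [hu₂]; linarith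
    · rw [hu₂]; linarith
    · rw [hu₁]; field_simp; ring
    · rw [hu₂]; field_simp; ring
  rcases le_or_gt τ'₁ τ'₂ with hcase | hcase
  · -- τ'₁ ≤ τ'₂, so u₂ n ≤ u₁ n
    have hvu : ∀ n : ℕ, u₂ n ≤ u₁ n := by
      intro n
      rw [hu₁, hu₂]
      have hinv : (0:ℝ) ≤ ((n:ℝ))⁻¹ := inv_nonneg.2 (Nat.cast_nonneg n)
      have := mul_le_mul_of_nonneg_right hcase hinv
      rw [div_eq_mul_inv, div_eq_mul_inv]
      linarith
    -- intersection formula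
    have hPA₁₂ : ∀ n : ℕ, 0 ≤ u₂ n → u₁ n ≤ 1 →
        (P (A₁ n ∩ A₂ n)).toReal
        = (u₁ n)^2 * u₂ n * (1 - u₁ n) + (u₁ n)^2 * (1 - u₁ n) * u₂ n * (u₁ n - u₂ n) := by
      intro n h0v h1u
      have h0u : 0 ≤ u₁ n := le_trans h0v (hvu n)
      have h1v : u₂ n ≤ 1 := le_trans (hvu n) h1u
      have hid : A₁ n ∩ A₂ n =
          (Y (-2) ⁻¹' Iic (u₁ n) ∩ (Y (-1) ⁻¹' Iic (u₁ n) ∩ ((Y 0 ⁻¹' univ) ∩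
            (Y 1 ⁻¹' Iic (u₂ n) ∩ Y 2 ⁻¹' Ioi (u₁ n)))))
          ∪ (Y (-2) ⁻¹' Iic (u₁ n) ∩ (Y (-1) ⁻¹' Iic (u₁ n) ∩ ((Y 0 ⁻¹' Ioi (u₁ n)) ∩
            (Y 1 ⁻¹' Iic (u₂ n) ∩ Y 2 ⁻¹' Ioc (u₂ n) (u₁ n))))) := by
        rw [hA₁' n, hA₂' n]
        ext ω
        simp only [mem_inter_iff, mem_setOf_eq, mem_union, mem_preimage, mem_Iic, mem_Ioi,
          mem_Ioc, mem_univ, true_and]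
        constructor
        · rintro ⟨⟨⟨h1, hm1, hm2⟩, hB⟩, hy1, hy2⟩
          rcases le_or_gt (Y 2 ω) (u₁ n) with h2 | h2
          · right
            refine ⟨hm2, hm1, ?_, hy1, hy2, h2⟩
            rcases hB with h | h | h
            · linarith
            · exact h
            · linarith
          · left; exact ⟨hm2, hm1, hy1, h2⟩
        · rintro (⟨hm2, hm1, hy1, h2⟩ | ⟨hm2, hm1, h0, hy1, hy2, h2⟩)
          · exact ⟨⟨⟨le_trans hy1 (hvu n), hm1, hm2⟩, Or.inl h2⟩, hy1, lt_of_le_of_lt (hvu n) h2⟩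
          · exact ⟨⟨⟨le_trans hy1 (hvu n), hm1, hm2⟩, Or.inr (Or.inl h0)⟩, hy1, hy2⟩
      rw [hid]
      rw [measure_union ?hdisj
        ((hIic _ _).inter ((hIic _ _).inter ((hIoi _ _).inter ((hIic _ _).inter (hIoc _ _ _)))))]
      case hdisj =>
        rw [Set.disjoint_left]
        rintro ω ⟨-, -, -, -, h2⟩ ⟨-, -, -, -, h2'⟩
        simp only [mem_preimage, mem_Ioi, mem_Ioc] at h2 h2'
        linarith [h2'.2]
      rw [ENNReal.toReal_add (measure_ne_top _ _) (measure_ne_top _ _)]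
      rw [rect5' P Y hYm hIndep hUnif _ _ _ _ _ measurableSet_Iic measurableSet_Iic
        MeasurableSet.univ measurableSet_Iic measurableSet_Ioi]
      rw [rect5' P Y hYm hIndep hUnif _ _ _ _ _ measurableSet_Iic measurableSet_Iic
        measurableSet_Ioi measurableSet_Iic measurableSet_Ioc]
      rw [uniIic _ h0u h1u, uniIic _ h0v h1v, uniIoi _ h0u, uniIoc _ _ h0v h1u, uniUniv]
      simp only [ENNReal.toReal_mul, ENNReal.toReal_ofReal h0u, ENNReal.toReal_ofReal h0v,
        ENNReal.toReal_ofReal (by linarith : (0:ℝ) ≤ 1 - u₁ n),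
        ENNReal.toReal_ofReal (by linarith [hvu n] : (0:ℝ) ≤ u₁ n - u₂ n), ENNReal.toReal_one]
      ring
    simp only [if_pos hcase]
    constructor
    · -- first limit : τ'₁
      have T : Tendsto (fun n : ℕ => ((u₁ n)^3 + (u₁ n)^4) * τ'₁
          - ((u₁ n)^2 * u₂ n + (u₁ n)^2 * u₂ n * (u₁ n - u₂ n)) * τ'₁) atTop
          (nhds ((((1:ℝ)^3 + 1^4) * τ'₁ - ((1:ℝ)^2 * 1 + (1:ℝ)^2 * 1 * (1 - 1)) * τ'₁))) := by
        exact (((hu.pow 3).add (hu.pow 4)).mul tendsto_const_nhds).sub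
          ((((hu.pow 2).mul hv).add (((hu.pow 2).mul hv).mul (hu.sub hv))).mul tendsto_const_nhds)
      rw [show τ'₁ = (((1:ℝ)^3 + 1^4) * τ'₁ - ((1:ℝ)^2 * 1 + (1:ℝ)^2 * 1 * (1 - 1)) * τ'₁) from by ring]
      apply Tendsto.congr' _ T
      filter_upwards [hev] with n ⟨h1, h2, h3⟩
      obtain ⟨⟨b1, b2⟩, ⟨b3, b4⟩, e1, e2⟩ := hbounds n h1 h2 h3
      rw [hdiff1 n, hPA₁ n b1 b2, hPA₁₂ n b3 b2]
      linear_combination ((u₁ n)^2 * u₂ n + (u₁ n)^2 * u₂ n * (u₁ n - u₂ n)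
        - (u₁ n)^3 - (u₁ n)^4) * e1
    · -- second limit : τ'₂ - τ'₁
      have T : Tendsto (fun n : ℕ => u₂ n * τ'₂
          - ((u₁ n)^2 * u₂ n + (u₁ n)^2 * u₂ n * (u₁ n - u₂ n)) * τ'₁) atTop
          (nhds ((1:ℝ) * τ'₂ - ((1:ℝ)^2 * 1 + (1:ℝ)^2 * 1 * (1 - 1)) * τ'₁)) := by
        exact (hv.mul tendsto_const_nhds).sub
          ((((hu.pow 2).mul hv).add (((hu.pow 2).mul hv).mul (hu.sub hv))).mul tendsto_const_nhds)
      rw [show τ'₂ - τ'₁ = ((1:ℝ) * τ'₂ - ((1:ℝ)^2 * 1 + (1:ℝ)^2 * 1 * (1 - 1)) * τ'₁) from by ring]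
      apply Tendsto.congr' _ T
      filter_upwards [hev] with n ⟨h1, h2, h3⟩
      obtain ⟨⟨b1, b2⟩, ⟨b3, b4⟩, e1, e2⟩ := hbounds n h1 h2 h3
      rw [hdiff2 n, hPA₂ n b3 b4, hPA₁₂ n b3 b2]
      linear_combination (- u₂ n) * e2 + ((u₁ n)^2 * u₂ n + (u₁ n)^2 * u₂ n * (u₁ n - u₂ n)) * e1
  · -- τ'₂ < τ'₁, so u₁ n ≤ u₂ n
    have huv : ∀ n : ℕ, u₁ n ≤ u₂ n := by
      intro n
      rw [hu₁, hu₂]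
      have hinv : (0:ℝ) ≤ ((n:ℝ))⁻¹ := inv_nonneg.2 (Nat.cast_nonneg n)
      have := mul_le_mul_of_nonneg_right hcase.le hinv
      rw [div_eq_mul_inv, div_eq_mul_inv]
      linarith
    have hPA₁₂ : ∀ n : ℕ, 0 ≤ u₁ n → u₂ n ≤ 1 →
        (P (A₁ n ∩ A₂ n)).toReal = (u₁ n)^3 * (1 - u₂ n) := by
      intro n h0u h1v
      have h1u : u₁ n ≤ 1 := le_trans (huv n) h1v
      have hid : A₁ n ∩ A₂ n =
          Y (-2) ⁻¹' Iic (u₁ n) ∩ (Y (-1) ⁻¹' Iic (u₁ n) ∩ ((Y 0 ⁻¹' univ) ∩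
            (Y 1 ⁻¹' Iic (u₁ n) ∩ Y 2 ⁻¹' Ioi (u₂ n)))) := by
        rw [hA₁' n, hA₂' n]
        ext ω
        simp only [mem_inter_iff, mem_setOf_eq, mem_preimage, mem_Iic, mem_Ioi,
          mem_univ, true_and]
        constructor
        · rintro ⟨⟨⟨h1, hm1, hm2⟩, hB⟩, hy1, hy2⟩
          exact ⟨hm2, hm1, h1, hy2⟩
        · rintro ⟨hm2, hm1, h1, h2⟩
          exact ⟨⟨⟨h1, hm1, hm2⟩, Or.inl (lt_of_le_of_lt (huv n) h2)⟩,
            le_trans h1 (huv n), h2⟩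
      rw [hid]
      rw [rect5' P Y hYm hIndep hUnif _ _ _ _ _ measurableSet_Iic measurableSet_Iic
        MeasurableSet.univ measurableSet_Iic measurableSet_Ioi]
      rw [uniIic _ h0u h1u, uniIoi _ (le_trans h0u (huv n)), uniUniv]
      simp only [ENNReal.toReal_mul, ENNReal.toReal_ofReal h0u,
        ENNReal.toReal_ofReal (by linarith : (0:ℝ) ≤ 1 - u₂ n), ENNReal.toReal_one]
      ring
    simp only [if_neg (not_le.2 hcase)]
    constructor
    · -- first limit : 2τ'₁ - τ'₂
      have T : Tendsto (fun n : ℕ => ((u₁ n)^3 + (u₁ n)^4) * τ'₁ - (u₁ n)^3 * τ'₂) atTop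
          (nhds ((((1:ℝ)^3 + 1^4) * τ'₁ - (1:ℝ)^3 * τ'₂))) := by
        exact (((hu.pow 3).add (hu.pow 4)).mul tendsto_const_nhds).sub
          ((hu.pow 3).mul tendsto_const_nhds)
      rw [show 2 * τ'₁ - τ'₂ = (((1:ℝ)^3 + 1^4) * τ'₁ - (1:ℝ)^3 * τ'₂) from by ring]
      apply Tendsto.congr' _ T
      filter_upwards [hev] with n ⟨h1, h2, h3⟩
      obtain ⟨⟨b1, b2⟩, ⟨b3, b4⟩, e1, e2⟩ := hbounds n h1 h2 h3
      rw [hdiff1 n, hPA₁ n b1 b2, hPA₁₂ n b1 b4]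
      linear_combination (- (u₁ n)^3 - (u₁ n)^4) * e1 + (u₁ n)^3 * e2
    · -- second limit : 0
      have T : Tendsto (fun n : ℕ => u₂ n * τ'₂ - (u₁ n)^3 * τ'₂) atTop
          (nhds ((1:ℝ) * τ'₂ - (1:ℝ)^3 * τ'₂)) := by
        exact (hv.mul tendsto_const_nhds).sub ((hu.pow 3).mul tendsto_const_nhds)
      rw [show (0:ℝ) = ((1:ℝ) * τ'₂ - (1:ℝ)^3 * τ'₂) from by ring]
      apply Tendsto.congr' _ T
      filter_upwards [hev] with n ⟨h1, h2, h3⟩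
      obtain ⟨⟨b1, b2⟩, ⟨b3, b4⟩, e1, e2⟩ := hbounds n h1 h2 h3
      rw [hdiff2 n, hPA₂ n b3 b4, hPA₁₂ n b1 b4]
      linear_combination ((u₁ n)^3 - u₂ n) * e2
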